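/- Let p₁, …, p_k ∈ ℝⁿ and h ∈ ℝᵏ, and let u(x) = max_i (p_i·x + h_i). If p_i is not in the convex hull of the remaining points p₁, …, p_{i−1}, p_{i+1}, …, p_k, then the Legendre–Fenchel dual satisfies u*(p_i) = −h_i. -/

import Mathlib

open scoped RealInnerProductSpace

/-- If `p i` is not in the convex hull of the remaining points, then the
Legendre–Fenchel dual of `u_h(x) = max_j (⟪p j, x⟫ + h j)` satisfies `u*(p i) = -h i`. -/
theorem dual_value_at_vertex (n k : ℕ) [NeZero k]
    (p : Fin k → EuclideanSpace ℝ (Fin n)) (h : Fin k → ℝ) (i : Fin k)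
    (hi : p i ∉ convexHull ℝ (p '' {j | j ≠ i}))
    (u : EuclideanSpace ℝ (Fin n) → ℝ)
    (hu : ∀ x, u x = Finset.univ.sup' Finset.univ_nonempty (fun j => ⟪p j, x⟫ + h j))
    (ustar : EuclideanSpace ℝ (Fin n) → EReal)
    (hustar : ∀ y, ustar y = ⨆ x : EuclideanSpace ℝ (Fin n), ((⟪x, y⟫ - u x : ℝ) : EReal)) :
    ustar (p i) = ((-h i : ℝ) : EReal) := by
  -- separation
  have hfin : (p '' {j | j ≠ i}).Finite := (Set.toFinite _).image p
  have hclosed : IsClosed (convexHull ℝ (p '' {j | j ≠ i})) :=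
    (hfin.isCompact_convexHull ℝ).isClosed
  obtain ⟨f, c, hfc, hci⟩ :=
    geometric_hahn_banach_closed_point (convex_convexHull ℝ _) hclosed hi
  set v : EuclideanSpace ℝ (Fin n) := (InnerProductSpace.toDual ℝ _).symm f with hv
  have hvf : ∀ x, ⟪v, x⟫ = f x := fun x => InnerProductSpace.toDual_symm_apply
  set δ : ℝ := f (p i) - c with hδ
  have hδpos : 0 < δ := sub_pos.2 hci
  set t : ℝ := max 0 (Finset.univ.sup' Finset.univ_nonempty (fun j => (h j - h i) / δ))
    with ht
  have htnn : 0 ≤ t := le_max_left _ _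
  set x : EuclideanSpace ℝ (Fin n) := t • v with hx
  have hinner : ∀ j, ⟪p j, x⟫ = t * f (p j) := by
    intro j
    rw [hx, real_inner_smul_right, real_inner_comm, hvf]
  -- u x = ⟪p i, x⟫ + h i
  have hkey : ∀ j : Fin k, ⟪p j, x⟫ + h j ≤ ⟪p i, x⟫ + h i := by
    intro j
    rcases eq_or_ne j i with rfl | hji
    · exact le_refl _
    · have hpj : f (p j) < c := hfc _ (subset_convexHull ℝ _ ⟨j, hji, rfl⟩)
      have h1 : δ ≤ f (p i) - f (p j) := by simp [hδ]; linarith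
      have h2 : (h j - h i) / δ ≤ t :=
        le_max_of_le_right (Finset.le_sup' (fun j => (h j - h i) / δ) (Finset.mem_univ j))
      have h3 : h j - h i ≤ t * δ := by
        rw [div_le_iff₀ hδpos] at h2; linarith
      have h4 : t * δ ≤ t * (f (p i) - f (p j)) :=
        mul_le_mul_of_nonneg_left h1 htnn
      rw [hinner, hinner]
      nlinarith
  have hux : u x = ⟪p i, x⟫ + h i := by
    rw [hu]
    exact le_antisymm (Finset.sup'_le _ _ fun j _ => hkey j)
      (Finset.le_sup' (fun j => ⟪p j, x⟫ + h j) (Finset.mem_univ i))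
  have hxval : (⟪x, p i⟫ - u x : ℝ) = -h i := by
    rw [hux, real_inner_comm]; ring
  -- upper bound for all x
  have hub : ∀ y : EuclideanSpace ℝ (Fin n), (⟪y, p i⟫ - u y : ℝ) ≤ -h i := by
    intro y
    have : ⟪p i, y⟫ + h i ≤ u y := by
      rw [hu]; exact Finset.le_sup' (fun j => ⟪p j, y⟫ + h j) (Finset.mem_univ i)
    rw [real_inner_comm]; linarith
  rw [hustar]
  apply le_antisymm
  · exact iSup_le fun y => EReal.coe_le_coe_iff.2 (hub y)
  · calc ((-h i : ℝ) : EReal) = ((⟪x, p i⟫ - u x : ℝ) : EReal) := by rw [hxval]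
      _ ≤ _ := le_iSup (fun y : EuclideanSpace ℝ (Fin n) => ((⟪y, p i⟫ - u y : ℝ) : EReal)) x
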